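/- Let g_L(r; η) be the left ESFR correction function with parameter η ≥ 0 and degree p ≥ 1, and let h_L(r) = g_L(r; η_c) and h_R(r) = g_R(r; η_c) be correction functions with a (possibly different) parameter η_c ≥ 0. Then the function Δ_r g_L − g_L'(−1)·h_L' − g_L'(1)·h_R' equals ((−1)^p/2)[Ψ_p'' − Ψ_{p−1}''] + ((−1)^{p+1}/4) p(p+1)·(η_c Ψ_{p−1}' + Ψ_{p+1}')/(1+η_c) + ((−1)^p/4) p(p−1) Ψ_p', which is independent of η. -/

import Mathlib

/-- The degree-`p` Legendre polynomial via the Rodrigues formula. -/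
noncomputable def legendre (p : ℕ) (r : ℝ) : ℝ :=
  (1 / ((2:ℝ)^p * (Nat.factorial p))) * iteratedDeriv p (fun x : ℝ => (x^2 - 1)^p) r

/-- Left ESFR correction function with parameter `η`. -/
noncomputable def gL (p : ℕ) (η r : ℝ) : ℝ :=
  ((-1:ℝ)^p / 2) *
    (legendre p r - (η * legendre (p-1) r + legendre (p+1) r) / (1 + η))

/-- Right ESFR correction function with parameter `η`. -/
noncomputable def gR (p : ℕ) (η r : ℝ) : ℝ :=
  (1/2 : ℝ) *
    (legendre p r + (η * legendre (p-1) r + legendre (p+1) r) / (1 + η))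

open Polynomial
open Polynomial

lemma L1 (f : Polynomial ℝ) (n : ℕ) :
    derivative^[n+1] (X * f) =
      X * derivative^[n+1] f + C ((n:ℝ)+1) * derivative^[n] f := by
  induction n with
  | zero => simp [derivative_mul, map_ofNat, map_natCast, map_add, map_mul, map_one]; ring
  | succ n ih =>
    rw [Function.iterate_succ_apply' derivative (n+1) (X*f), ih]
    rw [Function.iterate_succ_apply' derivative (n+1) f]
    rw [Function.iterate_succ_apply' derivative n f]
    simp [derivative_mul, map_ofNat, map_natCast, map_add, map_mul, map_one]
    push_cast
    ring

lemma L2 (f : Polynomial ℝ) (n : ℕ) :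
    derivative^[n+2] ((X^2 - 1) * f) =
      (X^2-1) * derivative^[n+2] f + C (2*((n:ℝ)+2)) * X * derivative^[n+1] f
        + C (((n:ℝ)+2)*((n:ℝ)+1)) * derivative^[n] f := by
  induction n with
  | zero =>
    show derivative (derivative ((X^2-1) * f)) = _
    rw [show derivative^[2] f = derivative (derivative f) from rfl]
    simp [derivative_mul, map_ofNat, map_natCast, map_add, map_mul, map_one]
    ring
  | succ n ih =>
    rw [Function.iterate_succ_apply' derivative (n+2) ((X^2-1)*f), ih]
    rw [Function.iterate_succ_apply' derivative (n+2) f]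
    rw [Function.iterate_succ_apply' derivative (n+1) f]
    rw [Function.iterate_succ_apply' derivative n f]
    simp [derivative_mul, map_ofNat, map_natCast, map_add, map_mul, map_one]
    push_cast
    ring

lemma core (k : ℕ) :
    (X^2-1) * derivative^[k+1] (((X:Polynomial ℝ)^2-1)^k)
      = C ((k:ℝ)*((k:ℝ)+1)) * derivative^[k-1] (((X:Polynomial ℝ)^2-1)^k) := by
  match k with
  | 0 => simp
  | 1 =>
    show (X^2-1) * derivative (derivative ((X^2-1)^1)) = _
    simp [map_ofNat]
    ring
  | (n+2) =>
    set g : Polynomial ℝ := ((X:Polynomial ℝ)^2-1)^(n+2) with hg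
    have hbase : (X^2-1) * derivative g = C (2*((n:ℝ)+2)) * (X * g) := by
      rw [hg, derivative_pow]
      push_cast
      simp [map_ofNat, map_natCast, map_add, map_mul]
      ring
    have E := congrArg (fun q => derivative^[n+2] q) hbase
    rw [L2 (derivative g) n] at E
    rw [Polynomial.iterate_derivative_C_mul, L1 g (n+1)] at E
    rw [← Function.iterate_succ_apply derivative (n+2) g,
        ← Function.iterate_succ_apply derivative (n+1) g,
        ← Function.iterate_succ_apply derivative n g] at E
    show (X^2-1) * derivative^[n+3] g = C (((n+2:ℕ):ℝ) * (((n+2:ℕ):ℝ)+1)) * derivative^[n+1] g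
    push_cast
    simp only [map_ofNat, map_natCast, map_add, map_mul, map_one, Nat.cast_add, Nat.cast_ofNat] at E ⊢
    linear_combination E

noncomputable def Ppoly (k : ℕ) : Polynomial ℝ :=
  C (1 / ((2:ℝ)^k * (Nat.factorial k))) * derivative^[k] (((X:Polynomial ℝ)^2 - 1)^k)

lemma fact_cast_ne (k : ℕ) : ((Nat.factorial k : ℝ)) ≠ 0 := by
  exact_mod_cast (Nat.factorial_pos k).ne'

lemma hc_const (k : ℕ) :
    C (1/((2:ℝ)^(k+1)*((Nat.factorial (k+1)):ℝ))) * C (2*((k:ℝ)+1))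
      = C (1/((2:ℝ)^k * ((Nat.factorial k):ℝ))) := by
  rw [← C_mul]
  congr 1
  have h2 : ((2:ℝ))^k ≠ 0 := by positivity
  field_simp [Nat.factorial_succ]
  rw [Nat.factorial_succ]
  push_cast
  ring

lemma deriv_P_succ (k : ℕ) :
    derivative (Ppoly (k+1)) = X * derivative (Ppoly k) + C ((k:ℝ)+1) * Ppoly k := by
  have hfd : derivative (((X:Polynomial ℝ)^2-1)^(k+1))
      = C (2*((k:ℝ)+1)) * (X * (((X:Polynomial ℝ)^2-1)^k)) := by
    rw [derivative_pow]
    push_cast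
    simp [map_ofNat, map_natCast, map_add, map_mul, map_one]
    ring
  simp only [Ppoly]
  rw [derivative_C_mul, derivative_C_mul]
  rw [show derivative ((⇑derivative)^[k+1] (((X:Polynomial ℝ)^2-1)^(k+1)))
        = derivative^[k+1] (derivative (((X:Polynomial ℝ)^2-1)^(k+1))) from by
      rw [← Function.iterate_succ_apply' derivative, Function.iterate_succ_apply]]
  rw [hfd, Polynomial.iterate_derivative_C_mul, L1 _ k]
  rw [← Function.iterate_succ_apply' derivative k]
  linear_combination (hc_const k) *
    (X * derivative^[k+1] (((X:Polynomial ℝ)^2-1)^k)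
      + C ((k:ℝ)+1) * derivative^[k] (((X:Polynomial ℝ)^2-1)^k))

lemma hfd (k : ℕ) : derivative (((X:Polynomial ℝ)^2-1)^(k+1))
    = C (2*((k:ℝ)+1)) * (X * (((X:Polynomial ℝ)^2-1)^k)) := by
  rw [derivative_pow]
  push_cast
  simp [map_ofNat, map_natCast, map_add, map_mul, map_one]
  ring

lemma P_succ_eq (n : ℕ) :
    Ppoly (n+2) = X * Ppoly (n+1)
      + C ((n:ℝ)+1) * C (1/((2:ℝ)^(n+1)*((Nat.factorial (n+1)):ℝ)))
          * derivative^[n] (((X:Polynomial ℝ)^2-1)^(n+1)) := by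
  simp only [Ppoly]
  rw [Function.iterate_succ_apply derivative (n+1), hfd (n+1),
      Polynomial.iterate_derivative_C_mul, L1 _ n]
  linear_combination (hc_const (n+1)) *
    (X * derivative^[n+1] (((X:Polynomial ℝ)^2-1)^(n+1))
      + C ((n:ℝ)+1) * derivative^[n] (((X:Polynomial ℝ)^2-1)^(n+1)))

lemma deriv_P_recur (m : ℕ) :
    derivative (Ppoly (m+2)) - derivative (Ppoly m)
      = C (2*(m:ℝ)+3) * Ppoly (m+1) := by
  match m with
  | 0 =>
    simp only [Ppoly]
    norm_num [Function.iterate_succ_apply', Nat.factorial]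
    rw [show ((X:Polynomial ℝ)^2-1)^2 = X^4 - 2*X^2 + 1 by ring]
    simp [derivative_pow, map_ofNat]
    have e1 : (24:Polynomial ℝ) = C (24:ℝ) := by rw [map_ofNat]
    have e2 : (6:Polynomial ℝ) = C (6:ℝ) := by rw [map_ofNat]
    have e3 : C ((8⁻¹:ℝ)) * C (24:ℝ) = C ((2⁻¹:ℝ)) * C (6:ℝ) := by
      rw [← C_mul, ← C_mul]; norm_num
    linear_combination e3 * X + e1 * (C ((8⁻¹:ℝ)) * X) - e2 * (X * C ((2⁻¹:ℝ)))
  | (n+1) =>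
    have h1 := deriv_P_succ (n+2)
    have h2 := deriv_P_succ (n+1)
    have h3 := P_succ_eq n
    have h4 : (X^2-1) * derivative (Ppoly (n+1))
        = C (((n:ℝ)+1)*((n:ℝ)+2)) *
            (C (1/((2:ℝ)^(n+1)*((Nat.factorial (n+1)):ℝ)))
              * derivative^[n] (((X:Polynomial ℝ)^2-1)^(n+1))) := by
      simp only [Ppoly]
      rw [derivative_C_mul, ← Function.iterate_succ_apply' derivative (n+1)]
      have hcore := core (n+1)
      push_cast at hcore
      simp only [map_add, map_mul, map_one, map_ofNat, map_natCast] at hcore ⊢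
      linear_combination C (1/((2:ℝ)^(n+1)*((Nat.factorial (n+1)):ℝ))) * hcore
    push_cast at h1 h2 h3 h4 ⊢
    simp only [map_add, map_mul, map_one, map_ofNat, map_natCast] at h1 h2 h3 h4 ⊢
    linear_combination h1 + X * h2 + h4 - (((n:Polynomial ℝ))+2) * h3

lemma eval_inner (n : ℕ) (s : ℝ) (hs : s^2 = 1) :
    (derivative^[n] (((X:Polynomial ℝ)^2-1)^(n+1))).eval s = 0 := by
  have h := congrArg (fun q => q.eval s) (core (n+1))
  simp only [Nat.add_sub_cancel, eval_mul, eval_sub, eval_pow, eval_one, eval_C, eval_X] at h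
  rw [hs] at h
  push_cast at h
  have hne : ((n:ℝ)+1)*(((n:ℝ)+1)+1) ≠ 0 := by positivity
  have h0 : ((n:ℝ)+1)*(((n:ℝ)+1)+1) * (derivative^[n] (((X:Polynomial ℝ)^2-1)^(n+1))).eval s = 0 := by
    linarith [h]
  exact (mul_eq_zero.mp h0).resolve_left hne

lemma P_eval_one : ∀ k, (Ppoly k).eval 1 = 1
  | 0 => by simp [Ppoly]
  | 1 => by simp [Ppoly, Nat.factorial]; norm_num
  | (n+2) => by
    rw [P_succ_eq n]
    simp [eval_inner n 1 (by norm_num), P_eval_one (n+1)]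

lemma P_eval_negone : ∀ k, (Ppoly k).eval (-1) = (-1:ℝ)^k
  | 0 => by simp [Ppoly]
  | 1 => by simp [Ppoly, Nat.factorial]; norm_num
  | (n+2) => by
    rw [P_succ_eq n]
    simp [eval_inner n (-1) (by norm_num), P_eval_negone (n+1)]
    ring

lemma dP_eval_one : ∀ k, (derivative (Ppoly k)).eval 1 = (k:ℝ)*((k:ℝ)+1)/2
  | 0 => by simp [Ppoly]
  | (k+1) => by
    rw [deriv_P_succ k]
    simp [dP_eval_one k, P_eval_one (k)]
    push_cast
    ring

lemma dP_eval_negone : ∀ k, (derivative (Ppoly k)).eval (-1) = (-1:ℝ)^(k+1) * ((k:ℝ)*((k:ℝ)+1)/2)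
  | 0 => by simp [Ppoly]
  | (k+1) => by
    rw [deriv_P_succ k]
    simp [dP_eval_negone k, P_eval_negone k]
    push_cast
    ring

lemma D2_recur (m : ℕ) :
    derivative (derivative (Ppoly (m+2))) - derivative (derivative (Ppoly m))
      = C (2*(m:ℝ)+3) * derivative (Ppoly (m+1)) := by
  have h := congrArg derivative (deriv_P_recur m)
  simpa [derivative_sub, derivative_C_mul] using h


lemma iter_eval (q : Polynomial ℝ) (n : ℕ) :
    iteratedDeriv n (fun x => q.eval x) = fun x => (derivative^[n] q).eval x := by
  induction n with
  | zero => simp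
  | succ n ih =>
    rw [iteratedDeriv_succ, ih, Function.iterate_succ_apply']
    funext x
    exact Polynomial.deriv _


lemma legendre_eq (k : ℕ) : legendre k = fun r => (Ppoly k).eval r := by
  funext r
  have h : (fun x : ℝ => (x^2-1)^k) = fun x => (((X:Polynomial ℝ)^2-1)^k).eval x := by
    funext x; simp
  rw [legendre, h, iter_eval]
  simp [Ppoly]



theorem gL_combination_independent_of_eta (p : ℕ) (hp : 1 ≤ p)
    (η ηc : ℝ) (hη : 0 ≤ η) (hηc : 0 ≤ ηc) (r : ℝ) :
    deriv (deriv (gL p η)) r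
      - deriv (gL p η) (-1) * deriv (gL p ηc) r
      - deriv (gL p η) 1 * deriv (gR p ηc) r
    = ((-1:ℝ)^p / 2) *
        (deriv (deriv (legendre p)) r - deriv (deriv (legendre (p-1))) r)
      + ((-1:ℝ)^(p+1) / 4) * ((p:ℝ)*((p:ℝ)+1)) *
          ((ηc * deriv (legendre (p-1)) r + deriv (legendre (p+1)) r) / (1 + ηc))
      + ((-1:ℝ)^p / 4) * ((p:ℝ)*((p:ℝ)-1)) * deriv (legendre p) r := by
  obtain ⟨m, rfl⟩ : ∃ m, p = m+1 := ⟨p-1, (Nat.succ_pred_eq_of_pos hp).symm⟩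
  have hη1 : (1:ℝ) + η ≠ 0 := by positivity
  have hηc1 : (1:ℝ) + ηc ≠ 0 := by positivity
  -- the gL/gR functions as polynomial evaluations
  have hgLf : ∀ t : ℝ, (1:ℝ) + t ≠ 0 → gL (m+1) t = fun x =>
      (C ((-1:ℝ)^(m+1)/2) *
        (Ppoly (m+1) - C (1/(1+t)) * (C t * Ppoly m + Ppoly (m+2)))).eval x := by
    intro t ht
    funext x
    simp only [gL, legendre_eq, Nat.add_sub_cancel, eval_mul, eval_sub, eval_add, eval_C]
    ring
  have hgRf : gR (m+1) ηc = fun x =>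
      (C ((1:ℝ)/2) *
        (Ppoly (m+1) + C (1/(1+ηc)) * (C ηc * Ppoly m + Ppoly (m+2)))).eval x := by
    funext x
    simp only [gR, legendre_eq, Nat.add_sub_cancel, eval_mul, eval_sub, eval_add, eval_C]
    ring
  -- first derivatives as polynomial evaluations
  have dgL : ∀ t : ℝ, (1:ℝ) + t ≠ 0 → deriv (gL (m+1) t) = fun x =>
      (derivative (C ((-1:ℝ)^(m+1)/2) *
        (Ppoly (m+1) - C (1/(1+t)) * (C t * Ppoly m + Ppoly (m+2))))).eval x := by
    intro t ht
    rw [hgLf t ht]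
    funext x
    exact Polynomial.deriv _
  have dgR : deriv (gR (m+1) ηc) = fun x =>
      (derivative (C ((1:ℝ)/2) *
        (Ppoly (m+1) + C (1/(1+ηc)) * (C ηc * Ppoly m + Ppoly (m+2))))).eval x := by
    rw [hgRf]
    funext x
    exact Polynomial.deriv _
  have d2gL : deriv (deriv (gL (m+1) η)) r =
      (derivative (derivative (C ((-1:ℝ)^(m+1)/2) *
        (Ppoly (m+1) - C (1/(1+η)) * (C η * Ppoly m + Ppoly (m+2)))))).eval r := by
    rw [dgL η hη1]
    exact Polynomial.deriv _
  have dleg : ∀ k, deriv (legendre k) = fun x => (derivative (Ppoly k)).eval x := by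
    intro k
    rw [legendre_eq k]
    funext x
    exact Polynomial.deriv _
  have d2leg : ∀ k, deriv (deriv (legendre k)) r
      = (derivative (derivative (Ppoly k))).eval r := by
    intro k
    rw [dleg k]
    exact Polynomial.deriv _
  have hrec := congrArg (fun q => q.eval r) (D2_recur m)
  simp only [eval_sub, eval_mul, eval_C] at hrec
  rw [d2gL, dgL η hη1, dgL ηc hηc1, dgR, d2leg, d2leg, dleg, dleg, dleg]
  simp only [Nat.add_sub_cancel, derivative_mul, derivative_C, derivative_sub,
    derivative_add, eval_mul, eval_sub, eval_add, eval_C, zero_mul, zero_add,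
    dP_eval_one, dP_eval_negone, P_eval_one, P_eval_negone]
  push_cast
  rw [show (derivative (derivative (Ppoly (m+2)))).eval r
        = (derivative (derivative (Ppoly m))).eval r
          + (2*(m:ℝ)+3) * (derivative (Ppoly (m+1))).eval r by linarith [hrec]]
  rcases Nat.even_or_odd m with hm | hm
  · simp only [pow_succ, hm.neg_one_pow]
    field_simp
    ring
  · simp only [pow_succ, hm.neg_one_pow]
    field_simp
    ring
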